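/- With μ, i, the blocks B_1, …, B_i, the block sizes l_j, and the counting function c_n as in the context, for every natural number n one has, as an identity of integers, c_n = ∑_{r=0}^{n} (−1)^{r+i} A_r · C(n − r + μ − 1, μ − 1), where A_r = ∑ ∏_{j=1}^{i} C(l_j, d_j), the inner sum being over all tuples (d_1, …, d_i) of positive integers with d_1 + ⋯ + d_i = r. (This is the closed-form coefficient extraction that yields the explicit Betti-number polynomial of Theorem 3.14 of the paper.) -/

import Mathlib

open Finset PowerSeries


lemma unit_cancel {R : Type*} [CommRing R] {a b w : R} (ha : a * w = 1) (hb : b * w = 1) :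
    a = b := by
  calc a = a * (b * w) := by rw [hb, mul_one]
    _ = b * (a * w) := by ring
    _ = b := by rw [ha, mul_one]

lemma coeff_one_sub_X_pow (L d : ℕ) :
    PowerSeries.coeff (R := ℤ) d ((1 - PowerSeries.X) ^ L) = (-1) ^ d * (L.choose d : ℤ) := by
  have h : (1 - PowerSeries.X : ℤ⟦X⟧) ^ L = ∑ k ∈ range (L + 1),
      (-PowerSeries.X) ^ k * 1 ^ (L - k) * (L.choose k : ℤ⟦X⟧) := by
    rw [sub_eq_add_neg, add_comm]
    exact add_pow _ _ _
  rw [h, map_sum]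
  have hterm : ∀ k ∈ range (L + 1),
      PowerSeries.coeff (R := ℤ) d ((-PowerSeries.X) ^ k * 1 ^ (L - k) * (L.choose k : ℤ⟦X⟧))
      = if d = k then (-1) ^ d * (L.choose d : ℤ) else 0 := by
    intro k _
    have h2 : (-PowerSeries.X : ℤ⟦X⟧) ^ k * 1 ^ (L - k) * (L.choose k : ℤ⟦X⟧)
        = PowerSeries.C (R := ℤ) ((-1) ^ k * (L.choose k : ℤ)) * PowerSeries.X ^ k := by
      rw [one_pow, mul_one, neg_pow, map_mul, map_pow, map_neg, map_one, map_natCast]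
      ring
    rw [h2, PowerSeries.coeff_C_mul, PowerSeries.coeff_X_pow]
    by_cases hd : d = k
    · subst hd; simp
    · simp [hd]
  rw [Finset.sum_congr rfl hterm, Finset.sum_ite_eq]
  by_cases hd : d ∈ range (L + 1)
  · rw [if_pos hd]
  · rw [if_neg hd]
    rw [mem_range, not_lt] at hd
    rw [Nat.choose_eq_zero_of_lt (by omega)]
    simp

lemma one_sub_mul_invOneSubPow (s : ℕ) :
    (PowerSeries.invOneSubPow ℤ s).val * (1 - PowerSeries.X) ^ s = 1 := by
  have := (PowerSeries.invOneSubPow ℤ s).val_inv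
  rwa [PowerSeries.invOneSubPow_inv_eq_one_sub_pow] at this

-- J := (invOneSubPow 1).val ; J ^ s = (invOneSubPow s).val
lemma invOneSubPow_one_pow (s : ℕ) :
    (PowerSeries.invOneSubPow ℤ 1).val ^ s = (PowerSeries.invOneSubPow ℤ s).val := by
  refine unit_cancel (w := (1 - PowerSeries.X) ^ s) ?_ (one_sub_mul_invOneSubPow s)
  rw [← mul_pow]
  have h1 := one_sub_mul_invOneSubPow 1
  rw [pow_one] at h1
  rw [h1, one_pow]

lemma invOneSubPow_sub (μ z : ℕ) (h : z ≤ μ) :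
    (PowerSeries.invOneSubPow ℤ (μ - z)).val
      = (1 - PowerSeries.X) ^ z * (PowerSeries.invOneSubPow ℤ μ).val := by
  refine unit_cancel (w := (1 - PowerSeries.X) ^ (μ - z)) (one_sub_mul_invOneSubPow _) ?_
  calc (1 - PowerSeries.X : ℤ⟦X⟧) ^ z * (PowerSeries.invOneSubPow ℤ μ).val
        * (1 - PowerSeries.X) ^ (μ - z)
      = (PowerSeries.invOneSubPow ℤ μ).val * (1 - PowerSeries.X) ^ (z + (μ - z)) := by
        rw [pow_add]; ring
    _ = 1 := by rw [Nat.add_sub_cancel' h, one_sub_mul_invOneSubPow]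

lemma coeff_invOneSubPow_one (m : ℕ) :
    PowerSeries.coeff (R := ℤ) m (PowerSeries.invOneSubPow ℤ 1).val = 1 := by
  rw [show (1 : ℕ) = 0 + 1 from rfl, PowerSeries.invOneSubPow_val_succ_eq_mk_add_choose,
    PowerSeries.coeff_mk]
  simp

lemma card_vanishing (μ n : ℕ) (Z : Finset (Fin μ)) :
    ((((Finset.finsuppAntidiag (univ : Finset (Fin μ)) n)).filter
        (fun l => ∀ k ∈ Z, l k = 0)).card : ℤ)
      = PowerSeries.coeff (R := ℤ) n (PowerSeries.invOneSubPow ℤ (μ - Z.card)).val := by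
  classical
  set J := (PowerSeries.invOneSubPow ℤ 1).val with hJ
  set f : Fin μ → ℤ⟦X⟧ := fun k => if k ∈ Z then 1 else J with hf
  have hprod : ∏ k : Fin μ, f k = (PowerSeries.invOneSubPow ℤ (μ - Z.card)).val := by
    rw [hf, Finset.prod_ite, Finset.prod_const, Finset.prod_const, one_pow, one_mul]
    have h1 : univ.filter (fun k => ¬ k ∈ Z) = Zᶜ := by ext k; simp
    rw [h1, Finset.card_compl, Fintype.card_fin, invOneSubPow_one_pow]
  have hcoeff : ∀ l : Fin μ →₀ ℕ,
      (∏ k : Fin μ, PowerSeries.coeff (R := ℤ) (l k) (f k))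
        = if (∀ k ∈ Z, l k = 0) then (1 : ℤ) else 0 := by
    intro l
    have hz : ∀ k ∈ Z, PowerSeries.coeff (R := ℤ) (l k) (f k) = if l k = 0 then 1 else 0 := by
      intro k hk
      rw [hf]; simp only [if_pos hk, PowerSeries.coeff_one]
    rw [← Finset.prod_subset (Finset.subset_univ Z)
      (fun k _ hk => by rw [hf]; simp only [if_neg hk, hJ, coeff_invOneSubPow_one]),
      Finset.prod_congr rfl hz, Finset.prod_boole]
    congr 1
  rw [← hprod, PowerSeries.coeff_prod, Finset.sum_congr rfl (fun l _ => hcoeff l),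
    Finset.sum_boole]

lemma coeff_P (i r : ℕ) (L : Fin i → ℕ) :
    PowerSeries.coeff (R := ℤ) r (∏ j : Fin i, (1 - (1 - PowerSeries.X) ^ (L j)))
      = (-1) ^ (r + i) *
        ∑ d ∈ (Finset.Nat.antidiagonalTuple i r).filter (fun d => ∀ j, 0 < d j),
          ∏ j, ((L j).choose (d j) : ℤ) := by
  classical
  have hF : ∀ (j : Fin i) (d : ℕ), PowerSeries.coeff (R := ℤ) d (1 - (1 - PowerSeries.X) ^ (L j))
      = if d = 0 then 0 else (-1) ^ (d + 1) * ((L j).choose d : ℤ) := by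
    intro j d
    rw [map_sub, PowerSeries.coeff_one, coeff_one_sub_X_pow]
    rcases Nat.eq_zero_or_pos d with hd | hd
    · subst hd; simp
    · rw [if_neg (by omega), if_neg (by omega), zero_sub, pow_succ]
      ring
  rw [PowerSeries.coeff_prod]
  have hterm : ∀ l ∈ Finset.finsuppAntidiag (univ : Finset (Fin i)) r,
      (∏ j : Fin i, PowerSeries.coeff (R := ℤ) (l j) (1 - (1 - PowerSeries.X) ^ (L j)))
        = if (∀ j, 0 < l j) then (-1) ^ (r + i) * ∏ j, ((L j).choose (l j) : ℤ) else 0 := by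
    intro l hl
    rw [Finset.mem_finsuppAntidiag] at hl
    by_cases hpos : ∀ j, 0 < l j
    · rw [if_pos hpos]
      have h1 : ∀ j ∈ (univ : Finset (Fin i)),
          PowerSeries.coeff (R := ℤ) (l j) (1 - (1 - PowerSeries.X) ^ (L j))
            = (-1) ^ (l j + 1) * ((L j).choose (l j) : ℤ) := by
        intro j _
        rw [hF, if_neg (by exact Nat.pos_iff_ne_zero.mp (hpos j))]
      rw [Finset.prod_congr rfl h1, Finset.prod_mul_distrib, Finset.prod_pow_eq_pow_sum]
      congr 2
      rw [Finset.sum_add_distrib, Finset.sum_const, card_univ, Fintype.card_fin, smul_eq_mul,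
        mul_one, hl.1]
    · rw [if_neg hpos]
      push_neg at hpos
      obtain ⟨j0, hj0⟩ := hpos
      exact Finset.prod_eq_zero (mem_univ j0) (by rw [hF, if_pos (by omega)])
  rw [Finset.sum_congr rfl hterm, ← Finset.sum_filter, ← Finset.mul_sum]
  congr 1
  refine Finset.sum_nbij' (fun l => ⇑l) (fun d => Finsupp.equivFunOnFinite.symm d)
      ?_ ?_ ?_ ?_ ?_
  · intro l hl
    simp only [Finset.mem_filter, Finset.mem_finsuppAntidiag] at hl
    simp only [Finset.mem_filter, Finset.Nat.mem_antidiagonalTuple]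
    exact ⟨hl.1.1, hl.2⟩
  · intro d hd
    simp only [Finset.mem_filter, Finset.Nat.mem_antidiagonalTuple] at hd
    simp only [Finset.mem_filter, Finset.mem_finsuppAntidiag]
    refine ⟨⟨?_, Finset.subset_univ _⟩, ?_⟩
    · rw [show ∀ g : Fin i →₀ ℕ, (univ : Finset (Fin i)).sum ⇑g = ∑ j, g j from fun g => rfl]
      simpa [Finsupp.equivFunOnFinite] using hd.1
    · intro j; simpa [Finsupp.equivFunOnFinite] using hd.2 j
  · intro l _; exact Finsupp.equivFunOnFinite_symm_coe l
  · intro d _; simp [Finsupp.equivFunOnFinite]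
  · intro l _; rfl

/-- With blocks `B_1, …, B_i ⊆ Fin μ` pairwise disjoint and nonempty, of sizes
`l_j`, and `c n` the number of `a : Fin μ → ℕ` with `∑ a = n` hitting each block positively,
one has for every `n`:
`c n = ∑_{r=0}^{n} (−1)^{r+i} A_r · C(n − r + μ − 1, μ − 1)` in `ℤ`, where
`A_r = ∑_{d_1+⋯+d_i = r, d_j ≥ 1} ∏_j C(l_j, d_j)`. -/
theorem stmt_6 (μ : ℕ) (hμ : 1 ≤ μ) (i : ℕ) (B : Fin i → Finset (Fin μ))
    (hB : ∀ j, (B j).Nonempty)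
    (hdisj : ∀ j j', j ≠ j' → Disjoint (B j) (B j'))
    (c : ℕ → ℕ)
    (hc : ∀ n, c n =
      Nat.card {a : Fin μ → ℕ // (∑ k, a k) = n ∧ ∀ j, ∃ k ∈ B j, 0 < a k})
    (n : ℕ) :
    (c n : ℤ) = ∑ r ∈ Finset.range (n + 1),
      (-1 : ℤ) ^ (r + i) *
        (∑ d ∈ (Finset.Nat.antidiagonalTuple i r).filter (fun d => ∀ j, 0 < d j),
          ∏ j, (((B j).card).choose (d j) : ℤ)) *
        ((n - r + μ - 1).choose (μ - 1) : ℤ) := by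
  classical
  set A := Finset.finsuppAntidiag (univ : Finset (Fin μ)) n with hA
  set T := A.filter (fun l => ∀ j, ∃ k ∈ B j, 0 < l k) with hT
  set P : ℤ⟦X⟧ := ∏ j : Fin i, (1 - (1 - PowerSeries.X) ^ ((B j).card)) with hP
  -- Step 1 : c n = T.card
  have h1 : (c n : ℤ) = (T.card : ℤ) := by
    rw [hc n]
    norm_cast
    rw [← Nat.card_eq_finsetCard]
    apply Nat.card_congr
    refine Equiv.subtypeEquiv Finsupp.equivFunOnFinite.symm ?_
    intro a
    simp only [hT, hA, Finset.mem_coe, Finset.mem_filter, Finset.mem_finsuppAntidiag,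
      Finsupp.equivFunOnFinite_symm_coe, Finset.subset_univ, and_true]
    constructor
    · rintro ⟨hs, hp⟩
      refine ⟨?_, by simpa [Finsupp.equivFunOnFinite] using hp⟩
      simpa [Finsupp.equivFunOnFinite] using hs
    · rintro ⟨hs, hp⟩
      refine ⟨?_, by simpa [Finsupp.equivFunOnFinite] using hp⟩
      simpa [Finsupp.equivFunOnFinite] using hs
  -- Step 2 : inclusion-exclusion
  have h2 : (T.card : ℤ) = ∑ S ∈ (univ : Finset (Fin i)).powerset,
      (-1) ^ S.card * (((A.filter (fun l => ∀ k ∈ S.biUnion B, l k = 0)).card : ℤ)) := by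
    have hswap : ∀ (S : Finset (Fin i)) (l : Fin μ →₀ ℕ),
        (∀ k ∈ S.biUnion B, l k = 0)
          ↔ S ⊆ univ.filter (fun j => ∀ k ∈ B j, l k = 0) := by
      intro S l
      simp only [Finset.mem_biUnion, Finset.subset_iff, Finset.mem_filter, Finset.mem_univ,
        true_and]
      constructor
      · intro h j hj k hk; exact h k ⟨j, hj, hk⟩
      · rintro h k ⟨j, hj, hk⟩; exact h hj k hk
    calc (T.card : ℤ)
        = ∑ l ∈ A, (if ∀ j, ∃ k ∈ B j, 0 < l k then (1 : ℤ) else 0) := by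
          rw [Finset.sum_boole, hT]
      _ = ∑ l ∈ A, ∑ S ∈ (univ : Finset (Fin i)).powerset,
            (-1) ^ S.card * (if ∀ k ∈ S.biUnion B, l k = 0 then (1 : ℤ) else 0) := by
          refine Finset.sum_congr rfl fun l _ => ?_
          have : ∀ S ∈ (univ : Finset (Fin i)).powerset,
              (-1 : ℤ) ^ S.card * (if ∀ k ∈ S.biUnion B, l k = 0 then (1 : ℤ) else 0)
                = if S ⊆ univ.filter (fun j => ∀ k ∈ B j, l k = 0)
                    then (-1) ^ S.card else 0 := by
            intro S _
            rw [mul_ite, mul_one, mul_zero]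
            exact if_congr (hswap S l) rfl rfl
          rw [Finset.sum_congr rfl this, ← Finset.sum_filter]
          have hps : ((univ : Finset (Fin i)).powerset).filter
              (fun S => S ⊆ univ.filter (fun j => ∀ k ∈ B j, l k = 0))
                = (univ.filter (fun j => ∀ k ∈ B j, l k = 0)).powerset := by
            ext S
            simp [Finset.mem_powerset, Finset.subset_univ]
          rw [hps, Finset.sum_powerset_neg_one_pow_card]
          have : (univ.filter (fun j => ∀ k ∈ B j, l k = 0)) = ∅
              ↔ (∀ j, ∃ k ∈ B j, 0 < l k) := by
            rw [Finset.filter_eq_empty_iff]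
            constructor
            · intro h j
              have := h (Finset.mem_univ j)
              push_neg at this
              obtain ⟨k, hk, hk0⟩ := this
              exact ⟨k, hk, Nat.pos_of_ne_zero hk0⟩
            · intro h j _
              obtain ⟨k, hk, hk0⟩ := h j
              push_neg
              exact ⟨k, hk, Nat.pos_iff_ne_zero.mp hk0⟩
          rw [if_congr this rfl rfl]
      _ = ∑ S ∈ (univ : Finset (Fin i)).powerset,
            (-1) ^ S.card * (((A.filter (fun l => ∀ k ∈ S.biUnion B, l k = 0)).card : ℤ)) := by
          rw [Finset.sum_comm]
          refine Finset.sum_congr rfl fun S _ => ?_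
          rw [← Finset.mul_sum, Finset.sum_boole]
  -- Step 3+4 : power series
  have h3 : ∀ S : Finset (Fin i),
      ((A.filter (fun l => ∀ k ∈ S.biUnion B, l k = 0)).card : ℤ)
        = PowerSeries.coeff (R := ℤ) n
            (PowerSeries.invOneSubPow ℤ (μ - (S.biUnion B).card)).val :=
    fun S => card_vanishing μ n (S.biUnion B)
  have h4 : ∑ S ∈ (univ : Finset (Fin i)).powerset,
      (-1 : ℤ) ^ S.card * PowerSeries.coeff (R := ℤ) n
          (PowerSeries.invOneSubPow ℤ (μ - (S.biUnion B).card)).val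
        = PowerSeries.coeff (R := ℤ) n (P * (PowerSeries.invOneSubPow ℤ μ).val) := by
    have hzle : ∀ S : Finset (Fin i), (S.biUnion B).card ≤ μ := by
      intro S
      simpa using Finset.card_le_univ (S.biUnion B)
    set v := (PowerSeries.invOneSubPow ℤ μ).val with hv
    have key : (∑ S ∈ (univ : Finset (Fin i)).powerset,
        ((-1 : ℤ) ^ S.card • (1 - PowerSeries.X) ^ ((S.biUnion B).card) : ℤ⟦X⟧)) = P := by
      have hPP : P = ∏ j : Fin i, ((-(1 - PowerSeries.X) ^ ((B j).card)) + 1) := by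
        rw [hP]; exact Finset.prod_congr rfl fun j _ => by ring
      rw [hPP, Finset.prod_add]
      refine Finset.sum_congr rfl fun S hS => ?_
      rw [Finset.prod_const_one, mul_one]
      have hcb : (S.biUnion B).card = ∑ j ∈ S, (B j).card :=
        Finset.card_biUnion (fun j _ j' _ hne => hdisj j j' hne)
      rw [hcb, zsmul_eq_mul, ← Finset.prod_pow_eq_pow_sum]
      push_cast
      rw [show ((-1 : ℤ⟦X⟧) ^ S.card) = ∏ _j ∈ S, (-1 : ℤ⟦X⟧) from
        (Finset.prod_const _).symm, ← Finset.prod_mul_distrib]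
      exact Finset.prod_congr rfl fun j _ => by ring
    calc ∑ S ∈ (univ : Finset (Fin i)).powerset,
        (-1 : ℤ) ^ S.card * PowerSeries.coeff (R := ℤ) n
            (PowerSeries.invOneSubPow ℤ (μ - (S.biUnion B).card)).val
        = ∑ S ∈ (univ : Finset (Fin i)).powerset,
            PowerSeries.coeff (R := ℤ) n
              ((-1 : ℤ) ^ S.card • ((1 - PowerSeries.X) ^ ((S.biUnion B).card) * v)) := by
          refine Finset.sum_congr rfl fun S _ => ?_
          rw [map_smul, smul_eq_mul, invOneSubPow_sub μ _ (hzle S), hv]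
      _ = PowerSeries.coeff (R := ℤ) n (∑ S ∈ (univ : Finset (Fin i)).powerset,
            (-1 : ℤ) ^ S.card • ((1 - PowerSeries.X) ^ ((S.biUnion B).card) * v)) :=
          (map_sum _ _ _).symm
      _ = PowerSeries.coeff (R := ℤ) n (P * v) := by
          congr 1
          calc ∑ S ∈ (univ : Finset (Fin i)).powerset,
              (-1 : ℤ) ^ S.card • ((1 - PowerSeries.X) ^ ((S.biUnion B).card) * v)
              = ∑ S ∈ (univ : Finset (Fin i)).powerset,
                  ((-1 : ℤ) ^ S.card • (1 - PowerSeries.X) ^ ((S.biUnion B).card)) * v :=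
                Finset.sum_congr rfl fun S _ => (smul_mul_assoc _ _ _).symm
            _ = (∑ S ∈ (univ : Finset (Fin i)).powerset,
                  ((-1 : ℤ) ^ S.card • (1 - PowerSeries.X) ^ ((S.biUnion B).card) : ℤ⟦X⟧)) * v :=
                (Finset.sum_mul _ _ _).symm
            _ = P * v := by rw [key]
  -- Step 5 : expand the product coefficient
  have h5 : PowerSeries.coeff (R := ℤ) n (P * (PowerSeries.invOneSubPow ℤ μ).val)
      = ∑ r ∈ Finset.range (n + 1),
          PowerSeries.coeff (R := ℤ) r P * ((n - r + μ - 1).choose (μ - 1) : ℤ) := by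
    rw [PowerSeries.coeff_mul, Finset.Nat.sum_antidiagonal_eq_sum_range_succ_mk]
    refine Finset.sum_congr rfl fun r hr => ?_
    congr 1
    rw [PowerSeries.invOneSubPow_val_eq_mk_sub_one_add_choose_of_pos ℤ μ hμ,
      PowerSeries.coeff_mk]
    congr 2
    omega
  rw [h1, h2, Finset.sum_congr rfl fun S _ => by rw [h3 S], h4, h5]
  refine Finset.sum_congr rfl fun r _ => ?_
  rw [hP, coeff_P, mul_assoc]
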